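/- arXiv:1606.03704 — 3 statements merged into one kernel-verified Lean document; each statement's English description precedes it below -/
import Mathlib

section
/- Let E be a real vector space with dim_ℝ E = 3, and let A, B : E →ₗ[ℝ] ℂ be real-linear maps (ℂ regarded as a 2-dimensional real vector space). Define the real-linear map G : E → ℂ³ by G(v) = (A v, B v, conj(A v)), where conj denotes complex conjugation. If A is surjective, then the range of G contains no complex line: (range G) ⊓ i·(range G) = {0}, where i·(range G) denotes the image of range G under the real-linear map w ↦ i•w on ℂ³. -/
/-- Multiplication by the imaginary unit `i` as a real-linear map on a complex vector space. -/
noncomputable def mulI (V : Type*) [AddCommGroup V] [Module ℂ V] : V →ₗ[ℝ] V where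
  toFun v := Complex.I • v
  map_add' x y := smul_add Complex.I x y
  map_smul' r v := smul_comm Complex.I r v

/-- Let `E` be a real vector space of dimension `3` and `A, B : E →ₗ[ℝ] ℂ` real-linear maps.
If `A` is surjective, then the range of `G = (A, B, conj ∘ A) : E → ℂ³` contains no complex
line: `range G ⊓ i·(range G) = ⊥`. -/
theorem range_inf_mulI_map_eq_bot_of_surjective {E : Type*} [AddCommGroup E] [Module ℝ E]
    (hdim : Module.finrank ℝ E = 3) (A B : E →ₗ[ℝ] ℂ)
    (hA : Function.Surjective A) :
    (LinearMap.range (A.prod (B.prod (Complex.conjLIE.toLinearMap ∘ₗ A)))) ⊓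
      (LinearMap.range (A.prod (B.prod (Complex.conjLIE.toLinearMap ∘ₗ A)))).map
        (mulI (ℂ × ℂ × ℂ)) = ⊥ := by
  have hfd : FiniteDimensional ℝ E := FiniteDimensional.of_finrank_pos (by omega)
  rw [eq_bot_iff]
  rintro x ⟨⟨v, rfl⟩, hx2⟩
  simp only [SetLike.mem_coe, Submodule.mem_map, LinearMap.mem_range] at hx2
  obtain ⟨y, ⟨w, rfl⟩, hy⟩ := hx2
  simp only [LinearMap.prod_apply, Function.prod, LinearMap.comp_apply,
    LinearEquiv.coe_coe, LinearIsometryEquiv.coe_toLinearEquiv, mulI, LinearMap.coe_mk, AddHom.coe_mk,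
    Prod.smul_def, Prod.mk.injEq, smul_eq_mul, Complex.conjLIE_apply] at hy ⊢
  obtain ⟨h1, h2, h3⟩ := hy
  -- h3 : I * conj (A w) = conj (A v)
  have h3' : (starRingEnd ℂ) (Complex.I * (starRingEnd ℂ) (A w)) = A v := by
    rw [h3, Complex.conj_conj]
  rw [map_mul, Complex.conj_conj, Complex.conj_I] at h3'
  have hAw : A w = 0 := by
    have := h1.trans h3'.symm
    -- I * A w = -I * A w
    have : (2 * Complex.I) * A w = 0 := by ring_nf; linear_combination this
    simpa [Complex.I_ne_zero] using this
  have hAv : A v = 0 := by rw [← h1, hAw, mul_zero]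
  have hker : Module.finrank ℝ (LinearMap.ker A) = 1 := by
    have hrn := LinearMap.finrank_range_add_finrank_ker A
    rw [LinearMap.range_eq_top.mpr hA, finrank_top, Complex.finrank_real_complex, hdim] at hrn
    omega
  by_cases hv : v = 0
  · simp [hv]
  · have hBv : B v = 0 := by
      have hspan : (Submodule.span ℝ {v} : Submodule ℝ E) = LinearMap.ker A := by
        apply Submodule.eq_of_le_of_finrank_le
        · rw [Submodule.span_le, Set.singleton_subset_iff]; exact hAv
        · rw [hker, finrank_span_singleton hv]
      have hw : w ∈ Submodule.span ℝ ({v} : Set E) := by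
        rw [hspan]; exact hAw
      obtain ⟨c, rfl⟩ := Submodule.mem_span_singleton.mp hw
      rw [map_smul] at h2
      -- h2 : I * (c • B v) = B v
      by_contra hB
      have : (Complex.I * c - 1) * B v = 0 := by
        rw [sub_mul, one_mul, mul_assoc]
        rw [show (c : ℂ) * B v = c • B v by simp [Complex.real_smul], h2]
        ring
      rcases mul_eq_zero.mp this with h | h
      · have := congrArg Complex.re h
        simp [Complex.mul_re] at this
      · exact hB h
    simp [hAv, hBv]
end

section
/- Let E be a real vector space with dim_ℝ E = 3, and let A, B : E →ₗ[ℝ] ℂ be real-linear maps (ℂ regarded as a 2-dimensional real vector space) such that A is NOT surjective and ker A ⊓ ker B = {0}. Define the real-linear map G : E → ℂ³ by G(v) = (A v, B v, conj(A v)), where conj denotes complex conjugation. Then the image of ker A under G equals the complex line {(0, w, 0) : w ∈ ℂ} in ℂ³; in particular, (range G) ⊓ i·(range G) ≠ {0}, i.e. range G contains a complex line. -/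
lemma map_ker_top {E : Type*} [AddCommGroup E] [Module ℝ E]
    (hdim : Module.finrank ℝ E = 3) (A B : E →ₗ[ℝ] ℂ)
    (hA : ¬ Function.Surjective A)
    (hker : LinearMap.ker A ⊓ LinearMap.ker B = ⊥) :
    (LinearMap.ker A).map B = ⊤ := by
  have hfin : FiniteDimensional ℝ E := by
    have : 0 < Module.finrank ℝ E := by omega
    exact Module.finite_of_finrank_pos this
  have hrange : LinearMap.range A ≠ ⊤ := by
    intro h
    exact hA (LinearMap.range_eq_top.mp h)
  have hr1 : Module.finrank ℝ (LinearMap.range A) < 2 := by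
    have := Submodule.finrank_lt hrange
    rwa [Complex.finrank_real_complex] at this
  have hrn : Module.finrank ℝ (LinearMap.range A) + Module.finrank ℝ (LinearMap.ker A)
      = 3 := by rw [← hdim]; exact LinearMap.finrank_range_add_finrank_ker A
  have hk2 : 2 ≤ Module.finrank ℝ (LinearMap.ker A) := by omega
  have hinj : ∀ x ∈ LinearMap.ker A, B x = 0 → x = 0 := by
    intro x hx hBx
    have : x ∈ LinearMap.ker A ⊓ LinearMap.ker B := ⟨hx, hBx⟩
    rw [hker] at this
    exact this
  have hmapeq : (LinearMap.ker A).map B = LinearMap.range (B ∘ₗ (LinearMap.ker A).subtype) := by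
    rw [LinearMap.range_comp, Submodule.range_subtype]
  have hinj' : Function.Injective (B ∘ₗ (LinearMap.ker A).subtype) := by
    intro x y hxy
    have : ((x : E) - y) ∈ LinearMap.ker A ⊓ LinearMap.ker B := by
      refine ⟨?_, ?_⟩
      · exact sub_mem x.2 y.2
      · show B ((x : E) - y) = 0
        rw [map_sub, sub_eq_zero]
        exact hxy
    rw [hker, Submodule.mem_bot, sub_eq_zero] at this
    exact Subtype.ext this
  have hfr : Module.finrank ℝ ((LinearMap.ker A).map B)
      = Module.finrank ℝ (LinearMap.ker A) := by
    rw [hmapeq, LinearMap.finrank_range_of_inj hinj']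
  have hle : Module.finrank ℝ ((LinearMap.ker A).map B) ≤ 2 := by
    have := Submodule.finrank_le ((LinearMap.ker A).map B)
    rwa [Complex.finrank_real_complex] at this
  apply Submodule.eq_top_of_finrank_eq
  rw [Complex.finrank_real_complex]
  omega

/-- Let `E` be a real vector space of dimension `3` and `A, B : E →ₗ[ℝ] ℂ` real-linear maps
such that `A` is not surjective and `ker A ⊓ ker B = ⊥`. Then the image of `ker A` under
`G = (A, B, conj ∘ A) : E → ℂ³` is the complex line `{0} × ℂ × {0}`; in particular,
`range G ⊓ i·(range G) ≠ ⊥`, i.e. the range of `G` contains a complex line. -/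
theorem map_ker_eq_line_of_not_surjective {E : Type*} [AddCommGroup E] [Module ℝ E]
    (hdim : Module.finrank ℝ E = 3) (A B : E →ₗ[ℝ] ℂ)
    (hA : ¬ Function.Surjective A)
    (hker : LinearMap.ker A ⊓ LinearMap.ker B = ⊥) :
    (LinearMap.ker A).map (A.prod (B.prod (Complex.conjLIE.toLinearMap ∘ₗ A))) =
      (⊥ : Submodule ℝ ℂ).prod ((⊤ : Submodule ℝ ℂ).prod (⊥ : Submodule ℝ ℂ)) ∧
    (LinearMap.range (A.prod (B.prod (Complex.conjLIE.toLinearMap ∘ₗ A)))) ⊓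
      (LinearMap.range (A.prod (B.prod (Complex.conjLIE.toLinearMap ∘ₗ A)))).map
        (mulI (ℂ × ℂ × ℂ)) ≠ ⊥ := by
  have htop := map_ker_top hdim A B hA hker
  constructor
  · apply le_antisymm
    · rintro ⟨a, b, c⟩ ⟨v, hv, heq⟩
      simp only [LinearMap.prod_apply, Prod.mk.injEq, LinearMap.coe_comp,
        Function.comp_apply, Function.prod] at heq
      have hAv : A v = 0 := hv
      refine ⟨?_, trivial, ?_⟩ <;> simp_all
    · rintro ⟨a, b, c⟩ ⟨ha, -, hc⟩
      simp only [Submodule.mem_bot] at ha hc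
      subst ha hc
      have : b ∈ (LinearMap.ker A).map B := htop ▸ Submodule.mem_top
      obtain ⟨v, hv, hBv⟩ := this
      refine ⟨v, hv, ?_⟩
      have hAv : A v = 0 := hv
      simp [hAv, hBv]
  · intro hbot
    have : ((0 : ℂ), (Complex.I : ℂ), (0 : ℂ)) ∈
        (LinearMap.range (A.prod (B.prod (Complex.conjLIE.toLinearMap ∘ₗ A)))) ⊓
        (LinearMap.range (A.prod (B.prod (Complex.conjLIE.toLinearMap ∘ₗ A)))).map
          (mulI (ℂ × ℂ × ℂ)) := by
      obtain ⟨v, hv, hBv⟩ : (Complex.I : ℂ) ∈ (LinearMap.ker A).map B :=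
        htop ▸ Submodule.mem_top
      obtain ⟨w, hw, hBw⟩ : (1 : ℂ) ∈ (LinearMap.ker A).map B :=
        htop ▸ Submodule.mem_top
      have hAv : A v = 0 := hv
      have hAw : A w = 0 := hw
      constructor
      · exact ⟨v, by simp [hAv, hBv]⟩
      · refine ⟨(0, 1, 0), ⟨w, by simp [hAw, hBw]⟩, ?_⟩
        simp [mulI, Prod.ext_iff]
    rw [hbot] at this
    simp [Prod.ext_iff] at this
end

section
/- Let M be a C^∞ manifold without boundary modelled on EuclideanSpace ℝ (Fin 3) (a smooth 3-manifold), and let g₁, g₂ : M → ℂ be C^∞ maps (ℂ regarded as a smooth real 2-manifold) such that the map p ↦ (g₁ p, g₂ p) : M → ℂ² is an immersion, i.e. its differential mfderiv at every point is injective. Define G : M → ℂ³ by G(p) = (g₁(p), g₂(p), conj(g₁(p))), where conj denotes complex conjugation. Then: (a) G is a C^∞ immersion of M into ℂ³; and (b) for every p ∈ M, the point p is a complex tangent of G if and only if the differential mfderiv g₁ p : T_pM → ℂ is not surjective (i.e. p lies in the singular set S(g₁) of g₁). -/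
open scoped Manifold

/-- A real subspace `W` of a complex vector space contains a complex line iff `W ⊓ i·W ≠ ⊥`. -/
def HasComplexLine {V : Type*} [AddCommGroup V] [Module ℂ V] (W : Submodule ℝ V) : Prop :=
  W ⊓ W.map (mulI V) ≠ ⊥

/-- The range of the manifold differential at `x` of a map `F : M³ → ℂ³`,
as a real subspace of `ℂ³`. -/
noncomputable def mfderivRange {M : Type*} [TopologicalSpace M]
    [ChartedSpace (EuclideanSpace ℝ (Fin 3)) M] (F : M → ℂ × ℂ × ℂ) (x : M) :
    Submodule ℝ (ℂ × ℂ × ℂ) :=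
  LinearMap.range (((show TangentSpace (𝓡 3) x →L[ℝ] ℂ × ℂ × ℂ from
    mfderiv (𝓡 3) 𝓘(ℝ, ℂ × ℂ × ℂ) F x) : TangentSpace (𝓡 3) x →ₗ[ℝ] ℂ × ℂ × ℂ))

open Module in
lemma key {V : Type*} [AddCommGroup V] [Module ℝ V] [FiniteDimensional ℝ V]
    (hV : Module.finrank ℝ V = 3)
    (A B : V →ₗ[ℝ] ℂ) (L : V →ₗ[ℝ] ℂ × ℂ × ℂ)
    (hL : ∀ v, L v = (A v, B v, starRingEnd ℂ (A v)))
    (hinj : ∀ v, A v = 0 → B v = 0 → v = 0) :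
    HasComplexLine (LinearMap.range L) ↔ ¬ Function.Surjective A := by
  have hmulI : ∀ x : ℂ × ℂ × ℂ, mulI (ℂ × ℂ × ℂ) x = (Complex.I * x.1, Complex.I * x.2.1, Complex.I * x.2.2) := by
    intro x
    rfl
  constructor
  · -- complex line → not surjective
    intro h hsurj
    rw [HasComplexLine, Submodule.ne_bot_iff] at h
    obtain ⟨x, hx, hx0⟩ := h
    obtain ⟨hxW, hxiW⟩ := hx
    obtain ⟨v, hv⟩ := hxW
    obtain ⟨y, ⟨w, hw⟩, hy⟩ := hxiW
    -- x = L v and x = I • L w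
    rw [← hw, hmulI, hL] at hy
    rw [hL] at hv
    have hkey : (A v, B v, starRingEnd ℂ (A v)) = (Complex.I * A w, Complex.I * B w, Complex.I * starRingEnd ℂ (A w)) := hv.trans hy.symm
    rw [Prod.ext_iff, Prod.ext_iff] at hkey
    obtain ⟨h1, h2, h3⟩ := hkey
    dsimp only at h1 h2 h3
    have hAw : A w = 0 := by
      have := congrArg (starRingEnd ℂ) h3
      simp only [map_mul, Complex.conj_conj, Complex.conj_I] at this
      rw [h1] at this
      have : (2 : ℂ) * (Complex.I * A w) = 0 := by ring_nf; ring_nf at this; linear_combination this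
      simpa [Complex.I_ne_zero] using this
    have hAv : A v = 0 := by rw [h1, hAw, mul_zero]
    have hBw : B w ≠ 0 := by
      intro h0
      apply hx0
      have hBv0 : B v = 0 := by rw [h2, h0, mul_zero]
      rw [← hv, hAv, hBv0]
      simp
    -- v, w linearly independent
    have hli : LinearIndependent ℝ ![v, w] := by
      rw [LinearIndependent.pair_iff]
      intro s t hst
      have hB : (s : ℂ) * B v + (t : ℂ) * B w = 0 := by
        have := congrArg B hst
        simpa [Complex.real_smul] using this
      rw [h2] at hB
      have : ((s : ℂ) * Complex.I + t) * B w = 0 := by ring_nf; ring_nf at hB; linear_combination hB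
      have h4 : (s : ℂ) * Complex.I + t = 0 := by
        rcases mul_eq_zero.1 this with h | h
        · exact h
        · exact absurd h hBw
      have hs : s = 0 := by
        have := congrArg Complex.im h4; simpa using this
      have ht : t = 0 := by
        have := congrArg Complex.re h4; simpa [hs] using this
      exact ⟨hs, ht⟩
    -- span ≤ ker A
    have hspan : Submodule.span ℝ (Set.range ![v, w]) ≤ LinearMap.ker A := by
      rw [Submodule.span_le]
      rintro z hz
      simp only [Set.mem_range] at hz
      obtain ⟨i, rfl⟩ := hz
      fin_cases i <;> simp [hAv, hAw]
    have h2le : 2 ≤ finrank ℝ (LinearMap.ker A) := by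
      have := Submodule.finrank_mono hspan
      rw [finrank_span_eq_card hli] at this
      simpa using this
    have hrange : finrank ℝ (LinearMap.range A) = 2 := by
      rw [LinearMap.range_eq_top.2 hsurj]
      simp [Complex.finrank_real_complex]
    have := LinearMap.finrank_range_add_finrank_ker A
    omega
  · -- not surjective → complex line
    intro hns
    have hrange_le : finrank ℝ (LinearMap.range A) ≤ 1 := by
      by_contra h
      push_neg at h
      have hle : finrank ℝ (LinearMap.range A) ≤ finrank ℝ ℂ := Submodule.finrank_le _
      rw [Complex.finrank_real_complex] at hle
      have : finrank ℝ (LinearMap.range A) = 2 := by omega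
      exact hns (LinearMap.range_eq_top.1 (Submodule.eq_top_of_finrank_eq (by
        rw [this, Complex.finrank_real_complex])))
    have hker : 2 ≤ finrank ℝ (LinearMap.ker A) := by
      have := LinearMap.finrank_range_add_finrank_ker A
      omega
    -- B maps ker A onto ℂ
    set C : LinearMap.ker A →ₗ[ℝ] ℂ := B.comp (LinearMap.ker A).subtype with hC
    have hCinj : Function.Injective C := by
      rw [← LinearMap.ker_eq_bot]
      rw [Submodule.eq_bot_iff]
      rintro ⟨z, hz⟩ hzk
      have : B z = 0 := hzk
      have : z = 0 := hinj z hz this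
      simpa using this
    have hCrange : LinearMap.range C = ⊤ := by
      apply Submodule.eq_top_of_finrank_eq
      have h1 := LinearMap.finrank_range_add_finrank_ker C
      rw [LinearMap.ker_eq_bot.2 hCinj, finrank_bot, add_zero] at h1
      have hle : finrank ℝ (LinearMap.range C) ≤ finrank ℝ ℂ := Submodule.finrank_le _
      rw [Complex.finrank_real_complex] at *
      omega
    obtain ⟨⟨w, hwk⟩, hw1⟩ : ∃ w, C w = 1 := by
      have : (1 : ℂ) ∈ LinearMap.range C := hCrange ▸ Submodule.mem_top
      exact this
    obtain ⟨⟨v, hvk⟩, hvI⟩ : ∃ v, C v = Complex.I := by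
      have : Complex.I ∈ LinearMap.range C := hCrange ▸ Submodule.mem_top
      exact this
    have hBw : B w = 1 := hw1
    have hBv : B v = Complex.I := hvI
    have hAw : A w = 0 := hwk
    have hAv : A v = 0 := hvk
    rw [HasComplexLine, Submodule.ne_bot_iff]
    refine ⟨(0, Complex.I, 0), ⟨⟨v, ?_⟩, ⟨(0,1,0), ⟨⟨w, ?_⟩, ?_⟩⟩⟩, ?_⟩
    · rw [hL, hAv, hBv]; simp
    · rw [hL, hAw, hBw]; simp
    · rw [hmulI]; simp
    · simp [Prod.ext_iff, Complex.I_ne_zero]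

/-- main -/
theorem immersion_complexTangent_iff_singular
    {M : Type*} [TopologicalSpace M] [ChartedSpace (EuclideanSpace ℝ (Fin 3)) M]
    [IsManifold (𝓡 3) ((⊤ : ℕ∞) : WithTop ℕ∞) M]
    (g₁ g₂ : M → ℂ)
    (hg₁ : ContMDiff (𝓡 3) 𝓘(ℝ, ℂ) (⊤ : ℕ∞) g₁) (hg₂ : ContMDiff (𝓡 3) 𝓘(ℝ, ℂ) (⊤ : ℕ∞) g₂)
    (himm : ∀ p : M,
      Function.Injective (mfderiv (𝓡 3) 𝓘(ℝ, ℂ × ℂ) (fun q => (g₁ q, g₂ q)) p)) :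
    (ContMDiff (𝓡 3) 𝓘(ℝ, ℂ × ℂ × ℂ)
        (⊤ : ℕ∞) (fun q => (g₁ q, g₂ q, starRingEnd ℂ (g₁ q))) ∧
      ∀ p : M, Function.Injective
        (mfderiv (𝓡 3) 𝓘(ℝ, ℂ × ℂ × ℂ) (fun q => (g₁ q, g₂ q, starRingEnd ℂ (g₁ q))) p)) ∧
    ∀ p : M,
      HasComplexLine (mfderivRange (fun q => (g₁ q, g₂ q, starRingEnd ℂ (g₁ q))) p) ↔
        ¬ Function.Surjective (mfderiv (𝓡 3) 𝓘(ℝ, ℂ) g₁ p) := by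
  set F : M → ℂ × ℂ := fun q => (g₁ q, g₂ q) with hF
  set L₀ : (ℂ × ℂ) →L[ℝ] ℂ × ℂ × ℂ :=
    (ContinuousLinearMap.fst ℝ ℂ ℂ).prod ((ContinuousLinearMap.snd ℝ ℂ ℂ).prod
      (Complex.conjCLE.toContinuousLinearMap.comp (ContinuousLinearMap.fst ℝ ℂ ℂ))) with hL₀
  have hfun : (fun q => (g₁ q, g₂ q, starRingEnd ℂ (g₁ q))) = L₀ ∘ F := by
    funext q
    simp [hL₀, hF, Function.comp]
  rw [hfun]
  have hFs : ContMDiff (𝓡 3) 𝓘(ℝ, ℂ × ℂ) (⊤ : ℕ∞) F := by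
    rw [modelWithCornersSelf_prod, ← chartedSpaceSelf_prod]
    exact hg₁.prodMk hg₂
  have hFd : ∀ p : M, HasMFDerivAt (𝓡 3) 𝓘(ℝ, ℂ × ℂ) F p
      (mfderiv (𝓡 3) 𝓘(ℝ, ℂ × ℂ) F p) :=
    fun p => (hFs.mdifferentiableAt (by simp)).hasMFDerivAt
  have hDG : ∀ p : M, mfderiv (𝓡 3) 𝓘(ℝ, ℂ × ℂ × ℂ) (L₀ ∘ F) p
      = L₀.comp (mfderiv (𝓡 3) 𝓘(ℝ, ℂ × ℂ) F p) :=
    fun p => (HasMFDerivAt.comp p L₀.hasMFDerivAt (hFd p)).mfderiv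
  have hg1d : ∀ p : M, mfderiv (𝓡 3) 𝓘(ℝ, ℂ) g₁ p
      = (ContinuousLinearMap.fst ℝ ℂ ℂ).comp (mfderiv (𝓡 3) 𝓘(ℝ, ℂ × ℂ) F p) := by
    intro p
    have h := (HasMFDerivAt.comp p (ContinuousLinearMap.fst ℝ ℂ ℂ).hasMFDerivAt (hFd p)).mfderiv
    have hg1f : g₁ = Prod.fst ∘ F := rfl
    rw [hg1f]
    exact h
  refine ⟨⟨L₀.contMDiff.comp hFs, fun p => ?_⟩, fun p => ?_⟩
  · rw [hDG p]
    intro x y hxy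
    apply himm p
    replace hxy : L₀ (mfderiv (𝓡 3) 𝓘(ℝ, ℂ × ℂ) F p x) = L₀ (mfderiv (𝓡 3) 𝓘(ℝ, ℂ × ℂ) F p y) := hxy
    have e1 : (mfderiv (𝓡 3) 𝓘(ℝ, ℂ × ℂ) F p x).1 = (mfderiv (𝓡 3) 𝓘(ℝ, ℂ × ℂ) F p y).1 := by
      have := congrArg Prod.fst hxy
      exact this
    have e2 : (mfderiv (𝓡 3) 𝓘(ℝ, ℂ × ℂ) F p x).2 = (mfderiv (𝓡 3) 𝓘(ℝ, ℂ × ℂ) F p y).2 := by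
      have := congrArg (fun z => z.2.1) hxy
      exact this
    exact Prod.ext e1 e2
  · haveI : FiniteDimensional ℝ (TangentSpace (𝓡 3) p) :=
      inferInstanceAs (FiniteDimensional ℝ (EuclideanSpace ℝ (Fin 3)))
    have hV : Module.finrank ℝ (TangentSpace (𝓡 3) p) = 3 := by
      show Module.finrank ℝ (EuclideanSpace ℝ (Fin 3)) = 3
      simp [finrank_euclideanSpace_fin]
    set DF := mfderiv (𝓡 3) 𝓘(ℝ, ℂ × ℂ) F p with hDF
    have hrange : mfderivRange (L₀ ∘ F) p = LinearMap.range ((L₀.comp DF) : TangentSpace (𝓡 3) p →ₗ[ℝ] ℂ × ℂ × ℂ) := by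
      simp only [mfderivRange]
      rw [hDG p]
    rw [hrange, hg1d p]
    have hL : ∀ v, ((L₀.comp DF) : TangentSpace (𝓡 3) p →ₗ[ℝ] ℂ × ℂ × ℂ) v
        = ((((ContinuousLinearMap.fst ℝ ℂ ℂ).comp DF) : TangentSpace (𝓡 3) p →ₗ[ℝ] ℂ) v,
           (((ContinuousLinearMap.snd ℝ ℂ ℂ).comp DF) : TangentSpace (𝓡 3) p →ₗ[ℝ] ℂ) v,
           starRingEnd ℂ ((((ContinuousLinearMap.fst ℝ ℂ ℂ).comp DF) : TangentSpace (𝓡 3) p →ₗ[ℝ] ℂ) v)) := by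
      intro v
      rfl
    have hinj : ∀ v, (((ContinuousLinearMap.fst ℝ ℂ ℂ).comp DF) : TangentSpace (𝓡 3) p →ₗ[ℝ] ℂ) v = 0 →
        (((ContinuousLinearMap.snd ℝ ℂ ℂ).comp DF) : TangentSpace (𝓡 3) p →ₗ[ℝ] ℂ) v = 0 → v = 0 := by
      intro v h1 h2
      apply himm p
      rw [map_zero]
      exact Prod.ext h1 h2
    exact key hV _ _ _ hL hinj
end
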